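/- In the Stackelberg model, maximizing x_f ↦ [expression] subject to the farmer's best response E_f(x_f) = (p_c ω k₁ H + μ_f V_f')/((1 − x_f)λ_f): the retailer's problem p_r D − (λ_r/2)E_r² − (x_f λ_f/2)E_f(x_f)² + V_r'(μ_f E_f(x_f) + μ_r E_r − δH) has first-order optimum x_f* = (2V_r' − V_f' − p_c ω k₁ H/μ_f)/(2V_r' + V_f' + p_c ω k₁ H/μ_f), provided the denominator is nonzero. -/

import Mathlib

theorem stackelberg_subsidy_first_order_condition
    (p_r D p_c ω k₁ H μ_f μ_r E_r δ lam_f lam_r Vf' Vr' : ℝ)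
    (hlamf : 0 < lam_f) (hμf : μ_f ≠ 0)
    (hden : 2 * Vr' + Vf' + p_c * ω * k₁ * H / μ_f ≠ 0)
    (E_f : ℝ → ℝ)
    (hEf : ∀ x_f, E_f x_f = (p_c * ω * k₁ * H + μ_f * Vf') / ((1 - x_f) * lam_f))
    (R : ℝ → ℝ)
    (hR : ∀ x_f, R x_f = p_r * D - lam_r / 2 * E_r ^ 2 - x_f * lam_f / 2 * (E_f x_f) ^ 2
        + Vr' * (μ_f * E_f x_f + μ_r * E_r - δ * H)) :
    HasDerivAt R 0
      ((2 * Vr' - Vf' - p_c * ω * k₁ * H / μ_f)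
        / (2 * Vr' + Vf' + p_c * ω * k₁ * H / μ_f)) := by
  set K := p_c * ω * k₁ * H with hK
  set A := K + μ_f * Vf' with hA
  set x₀ := (2 * Vr' - Vf' - K / μ_f) / (2 * Vr' + Vf' + K / μ_f) with hx₀
  have hlam : lam_f ≠ 0 := ne_of_gt hlamf
  by_cases hA0 : A = 0
  · -- R is constant
    have hRe : R = fun _ => p_r * D - lam_r / 2 * E_r ^ 2
        + Vr' * (μ_r * E_r - δ * H) := by
      funext x
      rw [hR, hEf, hA0]
      simp
    rw [hRe]
    exact hasDerivAt_const _ _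
  · have hAeq : A = μ_f * (Vf' + K / μ_f) := by
      rw [hA]; field_simp; ring
    have hVK : Vf' + K / μ_f ≠ 0 := by
      intro hc
      apply hA0
      rw [hAeq, hc, mul_zero]
    have h1xval : 1 - x₀ = 2 * (Vf' + K / μ_f) / (2 * Vr' + Vf' + K / μ_f) := by
      rw [hx₀, eq_div_iff hden, sub_mul, div_mul_cancel₀ _ hden]
      ring
    have h1x : 1 - x₀ ≠ 0 := by
      rw [h1xval]
      exact div_ne_zero (mul_ne_zero two_ne_zero hVK) hden
    have e1 : 1 + x₀ = 4 * Vr' / (2 * Vr' + Vf' + K / μ_f) := by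
      rw [hx₀, eq_div_iff hden, add_mul, div_mul_cancel₀ _ hden]
      ring
    have hrel : A * (1 + x₀) = 2 * Vr' * μ_f * (1 - x₀) := by
      rw [hAeq, e1, h1xval, mul_div_assoc', mul_div_assoc']
      rw [div_eq_div_iff hden hden]
      ring
    -- build the derivative
    have hu : HasDerivAt (fun x : ℝ => (1 - x) * lam_f) (-lam_f) x₀ := by
      have h := ((hasDerivAt_id x₀).const_sub 1).mul_const lam_f
      simpa using h
    have hune : (1 - x₀) * lam_f ≠ 0 := mul_ne_zero h1x hlam
    have hh : HasDerivAt (fun x : ℝ => A / ((1 - x) * lam_f))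
        ((0 * ((1 - x₀) * lam_f) - A * (-lam_f)) / ((1 - x₀) * lam_f) ^ 2) x₀ :=
      (hasDerivAt_const x₀ A).div hu hune
    set h0 : ℝ := A / ((1 - x₀) * lam_f) with hh0
    set h1 : ℝ := (0 * ((1 - x₀) * lam_f) - A * (-lam_f)) / ((1 - x₀) * lam_f) ^ 2 with hh1
    have hterm1 : HasDerivAt (fun x : ℝ => x * lam_f / 2 * (A / ((1 - x) * lam_f)) ^ 2)
        ((lam_f / 2) * h0 ^ 2 + x₀ * lam_f / 2 * (2 * h0 * h1)) x₀ := by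
      have ha : HasDerivAt (fun x : ℝ => x * lam_f / 2) (lam_f / 2) x₀ := by
        have := ((hasDerivAt_id x₀).mul_const lam_f).div_const 2
        simpa using this
      have hb : HasDerivAt (fun x : ℝ => (A / ((1 - x) * lam_f)) ^ 2) (2 * h0 * h1) x₀ := by
        have := hh.fun_pow 2
        simpa [hh0, mul_comm, mul_assoc, mul_left_comm] using this
      simpa [hh0] using ha.fun_mul hb
    have hterm2 : HasDerivAt (fun x : ℝ =>
        Vr' * (μ_f * (A / ((1 - x) * lam_f)) + μ_r * E_r - δ * H))
        (Vr' * (μ_f * h1)) x₀ := by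
      have := (((hh.const_mul μ_f).add_const (μ_r * E_r)).sub_const (δ * H)).const_mul Vr'
      simpa using this
    have hRf : HasDerivAt R
        (0 - ((lam_f / 2) * h0 ^ 2 + x₀ * lam_f / 2 * (2 * h0 * h1)) + Vr' * (μ_f * h1)) x₀ := by
      have hRe : R = fun x => p_r * D - lam_r / 2 * E_r ^ 2
          - x * lam_f / 2 * (A / ((1 - x) * lam_f)) ^ 2
          + Vr' * (μ_f * (A / ((1 - x) * lam_f)) + μ_r * E_r - δ * H) := by
        funext x; rw [hR, hEf]
      rw [hRe]
      exact (((hasDerivAt_const x₀ (p_r * D - lam_r / 2 * E_r ^ 2)).sub hterm1).add hterm2)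
    convert hRf using 1
    -- now a pure algebra goal; forget the definitions of A and x₀
    clear_value A x₀
    clear hx₀ hA hAeq hVK h1xval hEf hR hden hh hterm1 hterm2 hRf
    have factored : (lam_f / 2) * h0 ^ 2 + x₀ * lam_f / 2 * (2 * h0 * h1)
        - Vr' * (μ_f * h1)
        = (A * (1 + x₀) - 2 * Vr' * μ_f * (1 - x₀)) * A / (2 * (1 - x₀) ^ 3 * lam_f) := by
      rw [hh0, hh1]
      field_simp
      ring
    rw [hrel, sub_self, zero_mul, zero_div] at factored
    linarith [factored]
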